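/- arXiv:1312.1211 — 2 statements merged into one kernel-verified Lean document; each statement's English description precedes it below -/
import Mathlib

section
/- For any toll functional f, any admissible n, and any 1 ≤ k ≤ n: E[F_k(𝒯_n)] = n·E[f_k(ξ_1,…,ξ_k) | S_n = n − 1] = n·(P(S_{n−k} = n − k)/P(S_n = n − 1))·E[f_k(ξ_1,…,ξ_k)]. -/
open MeasureTheory ProbabilityTheory Filter Finset Topology
open scoped ENNReal NNReal

noncomputable section

namespace CGW

/-- `d` is the degree sequence (depth-first list of outdegrees) of a plane tree:
`d` is nonempty, `d₁ + ⋯ + d_j ≥ j` for `1 ≤ j < n`, and `d₁ + ⋯ + d_n = n - 1`. -/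
def IsDegSeq (d : List ℕ) : Prop :=
  d ≠ [] ∧ (∀ j, 1 ≤ j → j < d.length → j ≤ (d.take j).sum) ∧ d.sum = d.length - 1

/-- A toll functional vanishes off degree sequences. -/
def IsToll (f : List ℕ → ℝ) : Prop := ∀ d, ¬ IsDegSeq d → f d = 0

/-- The additive functional `F` induced by a toll functional `f`:
the sum of `f` over all contiguous windows `(d_i, …, d_j)`, `1 ≤ i ≤ j ≤ n`. -/
def addF (f : List ℕ → ℝ) (d : List ℕ) : ℝ :=
  ∑ i ∈ Finset.range d.length, ∑ k ∈ Finset.Icc 1 (d.length - i), f ((d.drop i).take k)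

/-- Product measure: the law of `(ξ_1, …, ξ_n)` for i.i.d. `ξ_i ∼ ν`. -/
def piMeas (ν : Measure ℕ) (n : ℕ) : Measure (Fin n → ℕ) := Measure.pi fun _ => ν

/-- `P(S_n = m)`. -/
def probS (ν : Measure ℕ) (n m : ℕ) : ℝ := ((piMeas ν n) {x | ∑ i, x i = m}).toReal

/-- `n` is admissible if `n ≥ 1` and `P(S_n = n - 1) > 0`. -/
def Admissible (ν : Measure ℕ) (n : ℕ) : Prop := 1 ≤ n ∧ 0 < probS ν n (n - 1)

/-- The filter "`n → ∞` along admissible `n`". -/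
def admFilter (ν : Measure ℕ) : Filter ℕ := atTop ⊓ 𝓟 {n | Admissible ν n}

/-- `E[g(ξ_1, …, ξ_k)]`. -/
def EE (ν : Measure ℕ) (k : ℕ) (g : List ℕ → ℝ) : ℝ :=
  ∫ x : Fin k → ℕ, g (List.ofFn x) ∂(piMeas ν k)

/-- The conditional expectation `E[g(ξ_1,…,ξ_n) ∣ S_n = n - 1]`. -/
def condE (ν : Measure ℕ) (n : ℕ) (g : (Fin n → ℕ) → ℝ) : ℝ :=
  (∫ x in {x : Fin n → ℕ | ∑ i, x i = n - 1}, g x ∂(piMeas ν n)) / probS ν n (n - 1)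

/-- The conditional variance given `S_n = n - 1`. -/
def varTn (ν : Measure ℕ) (n : ℕ) (g : (Fin n → ℕ) → ℝ) : ℝ :=
  condE ν n (fun x => g x ^ 2) - (condE ν n g) ^ 2

/-- The conditional covariance given `S_n = n - 1`. -/
def covTn (ν : Measure ℕ) (n : ℕ) (g h : (Fin n → ℕ) → ℝ) : ℝ :=
  condE ν n (fun x => g x * h x) - condE ν n g * condE ν n h

/-- The cyclic window `(x_i, x_{i+1}, …, x_{i+k-1})`, indices mod `n` (0-indexed). -/
def cycWin {n : ℕ} (x : Fin n → ℕ) (i k : ℕ) : List ℕ :=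
  if h : 0 < n then (List.range k).map fun j => x ⟨(i + j) % n, Nat.mod_lt _ h⟩ else []

/-- The statistic `Σ_{k=1}^n Σ_{i=1}^n f(x_i, …, x_{i+k-1 mod n})` whose conditional law
given `S_n = n - 1` is the law of `F(𝒯_n)`. -/
def cycF (f : List ℕ → ℝ) (n : ℕ) (x : Fin n → ℕ) : ℝ :=
  ∑ i ∈ Finset.range n, ∑ k ∈ Finset.Icc 1 n, f (cycWin x i k)

/-- `E[F(𝒯_n)]`. -/
def EFTn (ν : Measure ℕ) (f : List ℕ → ℝ) (n : ℕ) : ℝ := condE ν n (cycF f n)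

/-- `Var F(𝒯_n)`. -/
def VarFTn (ν : Measure ℕ) (f : List ℕ → ℝ) (n : ℕ) : ℝ := varTn ν n (cycF f n)

/-- `E[f(𝒯_n)] = n·E[f(ξ_1,…,ξ_n)] / P(S_n = n-1)`. -/
def EfTn (ν : Measure ℕ) (f : List ℕ → ℝ) (n : ℕ) : ℝ :=
  n * EE ν n f / probS ν n (n - 1)

/-- `E[f(𝒯_n)²] = n·E[f(ξ_1,…,ξ_n)²] / P(S_n = n-1)`. -/
def Ef2Tn (ν : Measure ℕ) (f : List ℕ → ℝ) (n : ℕ) : ℝ :=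
  n * EE ν n (fun d => f d ^ 2) / probS ν n (n - 1)

/-- `μ = E[f(𝒯)] = Σ_{k ≥ 1} E[f(ξ_1,…,ξ_k)]`. -/
def muF (ν : Measure ℕ) (f : List ℕ → ℝ) : ℝ := ∑' k : ℕ, EE ν (k + 1) f

/-- `γ² = 2 Σ_{k≥1} E[f(ξ_1,…,ξ_k)(F(ξ_1,…,ξ_k) - kμ)]
      - (Σ_{k≥1} E[f(ξ_1,…,ξ_k)²] - μ²) - μ²/σ²`. -/
def gamma2 (ν : Measure ℕ) (f : List ℕ → ℝ) (σ2 : ℝ) : ℝ :=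
  2 * (∑' k : ℕ, EE ν (k + 1) fun d => f d * (addF f d - (k + 1) * muF ν f))
    - ((∑' k : ℕ, EE ν (k + 1) fun d => f d ^ 2) - (muF ν f) ^ 2)
    - (muF ν f) ^ 2 / σ2

/-- `π_T = p_{t_1} ⋯ p_{t_ℓ}` for the plane tree with degree sequence `t`. -/
def piT (ν : Measure ℕ) (t : List ℕ) : ℝ := (t.map fun j => (ν {j}).toReal).prod

/-- The number of fringe subtrees of the tree with degree sequence `t` equal to the tree
with degree sequence `t'` (the number of windows of `t` equal to `t'`). -/
def subCount (t' t : List ℕ) : ℕ :=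
  ((Finset.range (t.length + 1 - t'.length)).filter
    fun i => (t.drop i).take t'.length = t').card

/-- The cyclic window count: the statistic whose conditional law given `S_n = n - 1`
is the law of the fringe-subtree count `n_{T'}(𝒯_n)`, where `t'` is the degree sequence
of `T'`. -/
def cycCount (t' : List ℕ) (n : ℕ) (x : Fin n → ℕ) : ℕ :=
  ((Finset.range n).filter fun i => cycWin x i t'.length = t').card

/-- Asymptotic covariance matrix `γ_{T,T'}` of fringe-subtree counts. -/
def gammaT (ν : Measure ℕ) (σ2 : ℝ) (t t' : List ℕ) : ℝ :=
  if t = t' then piT ν t - (2 * (t.length : ℝ) - 1 + σ2⁻¹) * piT ν t ^ 2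
  else (subCount t' t : ℝ) * piT ν t + (subCount t t' : ℝ) * piT ν t'
    - ((t.length : ℝ) + (t'.length : ℝ) - 1 + σ2⁻¹) * piT ν t * piT ν t'

/-- `f_k(d) = f(d)·1{|d| = k}`. -/
def fk (f : List ℕ → ℝ) (k : ℕ) : List ℕ → ℝ := fun d => if d.length = k then f d else 0

/-- The statistic `Σ_{i=1}^n f_k(x_i, …, x_{i+k-1 mod n})` whose conditional law given
`S_n = n - 1` is the law of `F_k(𝒯_n)`. -/
def cycFk (f : List ℕ → ℝ) (k n : ℕ) (x : Fin n → ℕ) : ℝ :=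
  ∑ i ∈ Finset.range n, fk f k (cycWin x i k)

/-- Plane (ordered rooted) trees. -/
inductive PTree : Type where
  | node : List PTree → PTree

namespace PTree

/-- The number of nodes of a plane tree. -/
def size : PTree → ℕ
  | node ts => 1 + (ts.attach.map fun t => size t.1).sum
  decreasing_by
    have := List.sizeOf_lt_of_mem t.2
    simp only [PTree.node.sizeOf_spec]
    omega

/-- The truncation of a plane tree at height `M`. -/
def trunc : ℕ → PTree → PTree
  | 0, _ => node []
  | M + 1, node ts => node (ts.attach.map fun t => trunc M t.1)
  decreasing_by
    have := List.sizeOf_lt_of_mem t.2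
    simp only [PTree.node.sizeOf_spec]
    omega

/-- The degree sequence (depth-first list of outdegrees) of a plane tree. -/
def degSeq : PTree → List ℕ
  | node ts => ts.length :: (ts.attach.map fun t => degSeq t.1).flatten
  decreasing_by
    have := List.sizeOf_lt_of_mem t.2
    simp only [PTree.node.sizeOf_spec]
    omega

end PTree

/-- `f` is a local functional of plane trees with cut-off `M`:
`f(T)` depends only on `T` truncated at height `M`. -/
def IsLocal (f : List ℕ → ℝ) (M : ℕ) : Prop :=
  ∀ T : PTree, f T.degSeq = f ((T.trunc M).degSeq)

/-- `f` is a weakly local functional of plane trees with cut-off `M`: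
`f(T)` depends only on the pair `(|T|, T^{(M)})`. -/
def IsWeaklyLocal (f : List ℕ → ℝ) (M : ℕ) : Prop :=
  ∀ T T' : PTree, T.size = T'.size → T.trunc M = T'.trunc M → f T.degSeq = f T'.degSeq

/-- `A_k`: the sup of `|f|` over degree sequences of length `k`, as an element of `ℝ≥0∞`. -/
def Abound (f : List ℕ → ℝ) (k : ℕ) : ℝ≥0∞ :=
  ⨆ d : {d : List ℕ // IsDegSeq d ∧ d.length = k}, ENNReal.ofReal |f d.1|


section MeanFkAux

variable (ν : Measure ℕ) [IsProbabilityMeasure ν]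

instance instPiMeasProb (n : ℕ) : IsProbabilityMeasure (piMeas ν n) := by
  unfold piMeas; infer_instance

lemma piMeas_singleton (n : ℕ) (x : Fin n → ℕ) :
    piMeas ν n {x} = ∏ i, ν {x i} := by
  have h : ({x} : Set (Fin n → ℕ)) = Set.pi Set.univ (fun i => {x i}) := by
    ext y
    simp [Set.mem_pi, funext_iff, eq_comm]
  rw [h, piMeas, Measure.pi_pi]

/-- The (finite) set of `x : Fin n → ℕ` with `∑ i, x i = m`, as a `Finset`. -/
def sliceF (n m : ℕ) : Finset (Fin n → ℕ) :=
  (Fintype.piFinset fun _ : Fin n => Finset.range (m+1)).filter fun x => ∑ i, x i = m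

lemma mem_sliceF {n m : ℕ} {x : Fin n → ℕ} : x ∈ sliceF n m ↔ ∑ i, x i = m := by
  simp only [sliceF, Finset.mem_filter, Fintype.mem_piFinset, Finset.mem_range]
  refine ⟨fun h => h.2, fun h => ⟨fun i => ?_, h⟩⟩
  have := Finset.single_le_sum (f := x) (fun i _ => Nat.zero_le _) (Finset.mem_univ i)
  omega

lemma coe_sliceF (n m : ℕ) : (sliceF n m : Set (Fin n → ℕ)) = {x | ∑ i, x i = m} := by
  ext x; simp [mem_sliceF]

lemma setIntegral_slice (n m : ℕ) (g : (Fin n → ℕ) → ℝ) :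
    ∫ x in {x : Fin n → ℕ | ∑ i, x i = m}, g x ∂(piMeas ν n)
      = ∑ x ∈ sliceF n m, (piMeas ν n {x}).toReal * g x := by
  rw [← coe_sliceF, integral_finset]
  simp [smul_eq_mul, Measure.real_def]
  exact IntegrableOn.finset

lemma probS_eq_sum (n m : ℕ) :
    probS ν n m = ∑ x ∈ sliceF n m, (piMeas ν n {x}).toReal := by
  have h := setIntegral_slice ν n m (fun _ => (1:ℝ))
  rw [setIntegral_const] at h
  simpa [probS, Measure.real_def] using h

lemma sum_slice_comp (n m : ℕ) (e : Fin n ≃ Fin n) (g : (Fin n → ℕ) → ℝ) :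
    ∑ x ∈ sliceF n m, (piMeas ν n {x}).toReal * g (x ∘ e)
      = ∑ x ∈ sliceF n m, (piMeas ν n {x}).toReal * g x := by
  have hw : ∀ x : Fin n → ℕ, piMeas ν n {x ∘ e} = piMeas ν n {x} := by
    intro x
    rw [piMeas_singleton, piMeas_singleton]
    exact Equiv.prod_comp e fun i => ν {x i}
  refine Finset.sum_nbij' (i := fun x => x ∘ e) (j := fun x => x ∘ e.symm) ?_ ?_ ?_ ?_ ?_
  · intro x hx
    rw [mem_sliceF] at hx ⊢
    rw [← hx]
    exact Equiv.sum_comp e x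
  · intro x hx
    rw [mem_sliceF] at hx ⊢
    rw [← hx]
    exact Equiv.sum_comp e.symm x
  · intro x _; funext j; simp
  · intro x _; funext j; simp
  · intro x _
    rw [hw]

lemma cycWin_shift {n k : ℕ} [NeZero n] (hk : k ≤ n) (c : Fin n) (x : Fin n → ℕ) :
    cycWin x (c : ℕ) k = cycWin (x ∘ (Equiv.addLeft c)) 0 k := by
  have hn : 0 < n := c.pos
  unfold cycWin
  rw [dif_pos hn, dif_pos hn]
  refine List.map_congr_left fun j hj => ?_
  have hjk : j < k := List.mem_range.mp hj
  have hjn : j < n := lt_of_lt_of_le hjk hk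
  simp only [Function.comp_apply, Equiv.coe_addLeft]
  congr 1
  rw [Fin.add_def]
  apply Fin.ext
  simp [Nat.mod_eq_of_lt hjn]

lemma cycWin_zero {n k : ℕ} (hn : 0 < n) (hk : k ≤ n) (x : Fin n → ℕ) :
    cycWin x 0 k = List.ofFn (fun i : Fin k => x (Fin.castLE hk i)) := by
  unfold cycWin
  rw [dif_pos hn]
  apply List.ext_getElem (by simp)
  intro j h1 h2
  simp only [List.getElem_map, List.getElem_range, List.getElem_ofFn]
  congr 1
  apply Fin.ext
  simp at h1
  simp [Nat.mod_eq_of_lt (lt_of_lt_of_le h1 hk)]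

lemma fk_eq_zero {f : List ℕ → ℝ} (hf : IsToll f) {k : ℕ} {d : List ℕ}
    (h : d.sum ≠ k - 1) : fk f k d = 0 := by
  unfold fk
  split
  · rename_i hlen
    by_cases hd : IsDegSeq d
    · exact absurd (hlen ▸ hd.2.2) h
    · exact hf d hd
  · rfl

lemma integral_cycFk (n k : ℕ) (hn : 0 < n) (hk : k ≤ n) (f : List ℕ → ℝ) :
    ∫ x in {x : Fin n → ℕ | ∑ i, x i = n - 1}, cycFk f k n x ∂(piMeas ν n)
      = n * ∫ x in {x : Fin n → ℕ | ∑ i, x i = n - 1},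
          fk f k (List.ofFn fun i : Fin k => x (Fin.castLE hk i)) ∂(piMeas ν n) := by
  haveI : NeZero n := ⟨hn.ne'⟩
  rw [setIntegral_slice, setIntegral_slice]
  unfold cycFk
  calc
    ∑ x ∈ sliceF n (n-1), (piMeas ν n {x}).toReal *
        ∑ i ∈ Finset.range n, fk f k (cycWin x i k)
      = ∑ i ∈ Finset.range n, ∑ x ∈ sliceF n (n-1),
          (piMeas ν n {x}).toReal * fk f k (cycWin x i k) := by
        simp_rw [Finset.mul_sum]
        rw [Finset.sum_comm]
    _ = ∑ i ∈ Finset.range n, ∑ x ∈ sliceF n (n-1),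
          (piMeas ν n {x}).toReal *
            fk f k (List.ofFn fun j : Fin k => x (Fin.castLE hk j)) := by
        refine Finset.sum_congr rfl fun i hi => ?_
        have hi' : i < n := Finset.mem_range.mp hi
        have h1 : ∀ x : Fin n → ℕ, fk f k (cycWin x i k)
            = (fun y => fk f k (List.ofFn fun j : Fin k => y (Fin.castLE hk j)))
                (x ∘ (Equiv.addLeft (⟨i, hi'⟩ : Fin n))) := by
          intro x
          have := cycWin_shift (n := n) hk (⟨i, hi'⟩ : Fin n) x
          simp only [Fin.val_mk] at this
          rw [this, cycWin_zero hn hk]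
        simp_rw [h1]
        exact sum_slice_comp ν n (n-1) (Equiv.addLeft (⟨i, hi'⟩ : Fin n))
          (fun y => fk f k (List.ofFn fun j : Fin k => y (Fin.castLE hk j)))
    _ = _ := by
        rw [Finset.sum_const, Finset.card_range, nsmul_eq_mul]

/-- The index `k + i` in `Fin n`. -/
def rIdx (n k : ℕ) (hkn : k ≤ n) (i : Fin (n - k)) : Fin n :=
  ⟨k + ↑i, by omega⟩

lemma prod_split {M : Type*} [CommMonoid M] {n k : ℕ} (hkn : k ≤ n) (x : Fin n → M) :
    ∏ i, x i = (∏ i : Fin k, x (Fin.castLE hkn i)) *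
      ∏ i : Fin (n - k), x (rIdx n k hkn i) := by
  have h : k + (n - k) = n := by omega
  calc ∏ i, x i = ∏ i : Fin (k + (n-k)), x (finCongr h i) :=
        (Fintype.prod_equiv (finCongr h) _ _ fun i => rfl).symm
    _ = _ := by
        rw [Fin.prod_univ_add]
        congr 1

lemma sum_split {M : Type*} [AddCommMonoid M] {n k : ℕ} (hkn : k ≤ n) (x : Fin n → M) :
    ∑ i, x i = (∑ i : Fin k, x (Fin.castLE hkn i)) +
      ∑ i : Fin (n - k), x (rIdx n k hkn i) := by
  have h : k + (n - k) = n := by omega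
  calc ∑ i, x i = ∑ i : Fin (k + (n-k)), x (finCongr h i) :=
        (Fintype.sum_equiv (finCongr h) _ _ fun i => rfl).symm
    _ = _ := by
        rw [Fin.sum_univ_add]
        congr 1

/-- Combining a `k`-tuple and an `(n-k)`-tuple into an `n`-tuple. -/
def combine (n k : ℕ) (hkn : k ≤ n) (y : Fin k → ℕ) (z : Fin (n - k) → ℕ) :
    Fin n → ℕ :=
  fun i => if h : (i : ℕ) < k then y ⟨i, h⟩ else z ⟨(i : ℕ) - k, by omega⟩

lemma combine_castLE (n k : ℕ) (hkn : k ≤ n) (y : Fin k → ℕ) (z : Fin (n - k) → ℕ)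
    (i : Fin k) : combine n k hkn y z (Fin.castLE hkn i) = y i := by
  unfold combine
  have hik : ((Fin.castLE hkn i : Fin n) : ℕ) < k := i.2
  simp only [dif_pos hik]
  exact congrArg y (Fin.ext rfl)

lemma combine_rIdx (n k : ℕ) (hkn : k ≤ n) (y : Fin k → ℕ) (z : Fin (n - k) → ℕ)
    (i : Fin (n - k)) : combine n k hkn y z (rIdx n k hkn i) = z i := by
  unfold combine rIdx
  have h : ¬ (k + (i : ℕ) < k) := by omega
  simp only [dif_neg h]
  exact congrArg z (Fin.ext (by simp))

lemma combine_self (n k : ℕ) (hkn : k ≤ n) (x : Fin n → ℕ) :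
    combine n k hkn (fun i => x (Fin.castLE hkn i)) (fun i => x (rIdx n k hkn i)) = x := by
  funext i
  unfold combine rIdx
  by_cases h : (i : ℕ) < k
  · simp only [dif_pos h]
    exact congrArg x (Fin.ext rfl)
  · simp only [dif_neg h]
    exact congrArg x (Fin.ext (by simp only []; omega))

lemma sum_combine (n k : ℕ) (hkn : k ≤ n) (y : Fin k → ℕ) (z : Fin (n - k) → ℕ) :
    ∑ i, combine n k hkn y z i = (∑ i, y i) + ∑ i, z i := by
  rw [sum_split hkn (combine n k hkn y z)]
  congr 1
  · exact Finset.sum_congr rfl fun i _ => combine_castLE n k hkn y z i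
  · exact Finset.sum_congr rfl fun i _ => combine_rIdx n k hkn y z i

lemma integral_first {f : List ℕ → ℝ} (hf : IsToll f) (n k : ℕ)
    (hk1 : 1 ≤ k) (hkn : k ≤ n) :
    ∫ x in {x : Fin n → ℕ | ∑ i, x i = n - 1},
        fk f k (List.ofFn fun i : Fin k => x (Fin.castLE hkn i)) ∂(piMeas ν n)
      = probS ν (n - k) (n - k) * EE ν k (fk f k) := by
  classical
  have hn1 : 1 ≤ n := le_trans hk1 hkn
  have hEE : EE ν k (fk f k)
      = ∑ y ∈ sliceF k (k-1), (piMeas ν k {y}).toReal * fk f k (List.ofFn y) := by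
    rw [← setIntegral_slice ν k (k-1) (fun y => fk f k (List.ofFn y))]
    unfold EE
    refine (setIntegral_eq_integral_of_forall_compl_eq_zero fun y hy => ?_).symm
    apply fk_eq_zero hf
    rw [List.sum_ofFn]
    exact hy
  rw [hEE, probS_eq_sum, setIntegral_slice]
  have hvan : ∀ x ∈ sliceF n (n-1),
      (piMeas ν n {x}).toReal * fk f k (List.ofFn fun i : Fin k => x (Fin.castLE hkn i)) ≠ 0 →
      (∑ i : Fin k, x (Fin.castLE hkn i)) = k - 1 := by
    intro x _ hne
    by_contra hsum
    apply hne
    have h0 : fk f k (List.ofFn fun i : Fin k => x (Fin.castLE hkn i)) = 0 := by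
      apply fk_eq_zero hf
      rw [List.sum_ofFn]
      exact hsum
    rw [h0, mul_zero]
  rw [← Finset.sum_filter_of_ne hvan]
  have key : ∑ x ∈ (sliceF n (n-1)).filter
        (fun x => (∑ i : Fin k, x (Fin.castLE hkn i)) = k - 1),
      (piMeas ν n {x}).toReal * fk f k (List.ofFn fun i : Fin k => x (Fin.castLE hkn i))
    = ∑ p ∈ (sliceF k (k-1)) ×ˢ (sliceF (n-k) (n-k)),
        ((piMeas ν k {p.1}).toReal * fk f k (List.ofFn p.1)) * (piMeas ν (n-k) {p.2}).toReal := by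
    refine Finset.sum_nbij'
      (i := fun x => ((fun i : Fin k => x (Fin.castLE hkn i)),
                      (fun i : Fin (n-k) => x (rIdx n k hkn i))))
      (j := fun p => combine n k hkn p.1 p.2)
      ?_ ?_ ?_ ?_ ?_
    · intro x hx
      rw [Finset.mem_filter, mem_sliceF] at hx
      rw [Finset.mem_product, mem_sliceF, mem_sliceF]
      obtain ⟨hx1, hx2⟩ := hx
      refine ⟨hx2, ?_⟩
      have hsplit := sum_split hkn x
      rw [hx1, hx2] at hsplit
      generalize hA : (∑ i : Fin (n-k), x (rIdx n k hkn i)) = A at hsplit ⊢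
      omega
    · intro p hp
      rw [Finset.mem_product, mem_sliceF, mem_sliceF] at hp
      rw [Finset.mem_filter, mem_sliceF]
      have hsum := sum_combine n k hkn p.1 p.2
      rw [hp.1, hp.2] at hsum
      have hfirst : (∑ i : Fin k, combine n k hkn p.1 p.2 (Fin.castLE hkn i)) = k - 1 := by
        rw [Finset.sum_congr rfl fun i _ => combine_castLE n k hkn p.1 p.2 i, hp.1]
      exact ⟨by rw [hsum]; omega, hfirst⟩
    · intro x _
      exact combine_self n k hkn x
    · intro p _
      refine Prod.ext ?_ ?_
      · funext i
        exact combine_castLE n k hkn p.1 p.2 i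
      · funext i
        exact combine_rIdx n k hkn p.1 p.2 i
    · intro x _
      have hwsplit : (piMeas ν n {x}).toReal
          = (piMeas ν k {fun i : Fin k => x (Fin.castLE hkn i)}).toReal *
            (piMeas ν (n-k) {fun i : Fin (n-k) => x (rIdx n k hkn i)}).toReal := by
        simp only [piMeas_singleton, ENNReal.toReal_prod]
        exact prod_split hkn fun i => (ν {x i}).toReal
      rw [hwsplit]
      ring
  rw [key, Finset.sum_product, Finset.sum_comm, Finset.sum_mul]
  refine Finset.sum_congr rfl fun z _ => ?_
  simp only []
  rw [← Finset.sum_mul]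
  ring

end MeanFkAux

/-- For any toll functional `f`, admissible `n`, and `1 ≤ k ≤ n`:
`E[F_k(𝒯_n)] = n·E[f_k(ξ_1,…,ξ_k) ∣ S_n = n-1]
             = n·(P(S_{n-k} = n-k)/P(S_n = n-1))·E[f_k(ξ_1,…,ξ_k)]`. -/
theorem mean_Fk
    (ν : Measure ℕ) [IsProbabilityMeasure ν]
    (hp0 : 0 < ν {0})
    (hmom1 : Integrable (fun x : ℕ => (x : ℝ)) ν)
    (hmean : ∫ x : ℕ, (x : ℝ) ∂ν = 1)
    (hmom2 : Integrable (fun x : ℕ => ((x : ℝ)) ^ 2) ν)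
    (σ2 : ℝ) (hσ2 : σ2 = ∫ x : ℕ, ((x : ℝ) - 1) ^ 2 ∂ν) (hσ2pos : 0 < σ2)
    (f : List ℕ → ℝ) (hf : IsToll f)
    (n k : ℕ) (hadm : Admissible ν n) (hk1 : 1 ≤ k) (hkn : k ≤ n) :
    condE ν n (cycFk f k n)
        = n * condE ν n (fun x => fk f k (List.ofFn fun i : Fin k => x (Fin.castLE hkn i))) ∧
    condE ν n (cycFk f k n)
        = n * (probS ν (n - k) (n - k) / probS ν n (n - 1)) * EE ν k (fk f k) := by
  obtain ⟨hn1, hP⟩ := hadm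
  have hn0 : 0 < n := hn1
  have hA := integral_cycFk ν n k hn0 hkn f
  have hB := integral_first ν hf n k hk1 hkn
  constructor
  · unfold condE
    rw [hA, mul_div_assoc]
  · unfold condE
    rw [hA, hB]
    ring

end CGW
end
end

section
/- Let f be a toll functional and write r_j := P(S_{n−j} = n − j)/P(S_n = n − 1), q := P(S_{n−k−m} = n − k − m + 1)/P(S_n = n − 1), a_k := E[f_k(ξ_1,…,ξ_k)], a_m := E[f_m(ξ_1,…,ξ_m)], and b := E[f_k(ξ_1,…,ξ_k)·F_m(ξ_1,…,ξ_k)]. If m ≤ k and n ≥ k + m − 1 with n admissible, then Cov(F_k(𝒯_n), F_m(𝒯_n)) = n·r_k·b − n(k + m − 1)·r_k·r_m·a_k·a_m + n(n − k − m + 1)·a_k·a_m·(q − r_k·r_m). If instead m ≤ k ≤ n ≤ k + m with n admissible, then Cov(F_k(𝒯_n), F_m(𝒯_n)) = n·r_k·b − n²·r_k·r_m·a_k·a_m. -/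
open MeasureTheory ProbabilityTheory Filter Finset Topology
open scoped ENNReal NNReal

noncomputable section

namespace CGW

/-! ### Auxiliary lemmas -/

open Fin.NatCast

section Aux

lemma measAll {n : ℕ} (s : Set (Fin n → ℕ)) : MeasurableSet s :=
  s.to_countable.measurableSet

lemma cycWin_pos {n : ℕ} (hn : 0 < n) (x : Fin n → ℕ) (i k : ℕ) :
    cycWin x i k = (List.range k).map fun j => x ⟨(i + j) % n, Nat.mod_lt _ hn⟩ :=
  dif_pos hn

lemma length_cycWin {n : ℕ} (hn : 0 < n) (x : Fin n → ℕ) (i k : ℕ) :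
    (cycWin x i k).length = k := by
  rw [cycWin_pos hn]; simp

lemma getElem_cycWin {n : ℕ} (hn : 0 < n) (x : Fin n → ℕ) (i k j : ℕ)
    (hj : j < (cycWin x i k).length) :
    (cycWin x i k)[j] = x ⟨(i + j) % n, Nat.mod_lt _ hn⟩ := by
  have hj' : j < k := by rwa [length_cycWin hn] at hj
  simp [cycWin_pos hn]

lemma cycWin_eq_ofFn {n : ℕ} (hn : 0 < n) (x : Fin n → ℕ) (i k : ℕ) :
    cycWin x i k = List.ofFn (fun j : Fin k => x ⟨(i + j) % n, Nat.mod_lt _ hn⟩) := by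
  apply List.ext_getElem (by simp [length_cycWin hn])
  intro j h1 h2
  rw [getElem_cycWin hn, List.getElem_ofFn]

lemma cycWin_mod {n : ℕ} (hn : 0 < n) (x : Fin n → ℕ) (i k : ℕ) :
    cycWin x (i % n) k = cycWin x i k := by
  apply List.ext_getElem (by rw [length_cycWin hn, length_cycWin hn])
  intro j h1 h2
  rw [getElem_cycWin hn, getElem_cycWin hn]
  congr 1
  exact Fin.ext (Nat.mod_add_mod i n j)

lemma cycWin_add_comp {n : ℕ} [NeZero n] (x : Fin n → ℕ) (i t k : ℕ) :
    cycWin (fun j => x (j + (i : Fin n))) t k = cycWin x (i + t) k := by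
  have hn : 0 < n := Nat.pos_of_ne_zero (NeZero.ne n)
  apply List.ext_getElem (by rw [length_cycWin hn, length_cycWin hn])
  intro j h1 h2
  rw [getElem_cycWin hn, getElem_cycWin hn]
  congr 1
  apply Fin.ext
  show ((t + j) % n + (i : Fin n).val) % n = (i + t + j) % n
  rw [Fin.val_natCast]
  conv_rhs => rw [show i + t + j = (t + j) + i by omega, Nat.add_mod (t + j) i n]

lemma cycWin_drop_take {n : ℕ} (hn : 0 < n) (x : Fin n → ℕ) (i t k m : ℕ)
    (htm : t + m ≤ k) (hk : k ≤ n) :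
    ((cycWin x i k).drop t).take m = cycWin x (i + t) m := by
  apply List.ext_getElem
  · rw [length_cycWin hn]
    simp only [List.length_take, List.length_drop, length_cycWin hn]
    omega
  intro j h1 h2
  have h3 : t + j < (cycWin x i k).length := by
    simp only [List.length_take, List.length_drop] at h1
    rw [length_cycWin hn] at *; omega
  rw [List.getElem_take, List.getElem_drop, getElem_cycWin hn, getElem_cycWin hn]
  congr 1
  apply Fin.ext
  show (i + (t + j)) % n = (i + t + j) % n
  rw [Nat.add_assoc]

lemma sum_cycWin_full {k : ℕ} (hk : 0 < k) (x : Fin k → ℕ) :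
    (cycWin x 0 k).sum = ∑ i, x i := by
  rw [cycWin_eq_ofFn hk, List.sum_ofFn]
  apply Finset.sum_congr rfl
  intro j _
  congr 1
  apply Fin.ext
  show (0 + j.val) % k = j.val
  rw [Nat.zero_add, Nat.mod_eq_of_lt j.isLt]

lemma sum_split_s16 {r k : ℕ} (hk : 0 < k) (x : Fin (r + k) → ℕ) :
    ∑ i, x i = (cycWin x 0 k).sum + ∑ i : Fin r, x ⟨k + i, by omega⟩ := by
  have hrk : 0 < r + k := by omega
  rw [cycWin_eq_ofFn hrk, List.sum_ofFn]
  have h1 : ∑ i, x i = ∑ j ∈ Finset.range (r + k), x ⟨j % (r + k), Nat.mod_lt _ hrk⟩ := by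
    rw [← Fin.sum_univ_eq_sum_range (fun j => x ⟨j % (r + k), Nat.mod_lt _ hrk⟩) (r + k)]
    apply Finset.sum_congr rfl
    intro j _
    congr 1
    exact Fin.ext (Nat.mod_eq_of_lt j.isLt).symm
  rw [h1, show Finset.range (r + k) = Finset.range (k + r) by rw [Nat.add_comm],
    Finset.sum_range_add (fun j => x ⟨j % (r + k), Nat.mod_lt _ hrk⟩) k r]
  congr 1
  · rw [← Fin.sum_univ_eq_sum_range (fun j => x ⟨j % (r + k), Nat.mod_lt _ hrk⟩) k]
    apply Finset.sum_congr rfl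
    intro j _
    congr 1
    apply Fin.ext
    show j.val % (r + k) = (0 + j.val) % (r + k)
    rw [Nat.zero_add]
  · rw [← Fin.sum_univ_eq_sum_range (fun j => x ⟨(k + j) % (r + k), Nat.mod_lt _ hrk⟩) r]
    apply Finset.sum_congr rfl
    intro j _
    congr 1
    apply Fin.ext
    show (k + j.val) % (r + k) = k + j.val
    exact Nat.mod_eq_of_lt (by omega)

lemma cycWin_drop {r k t m : ℕ} (x : Fin (r + k) → ℕ) (hm : 0 < m)
    (hkt : k ≤ t) (htm : t + m ≤ r + k) :
    cycWin x t m = cycWin (fun i : Fin r => x ⟨k + i, by omega⟩) (t - k) m := by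
  have hr : 0 < r := by omega
  have hrk : 0 < r + k := by omega
  apply List.ext_getElem (by rw [length_cycWin hrk, length_cycWin hr])
  intro j h1 h2
  rw [getElem_cycWin hrk, getElem_cycWin hr]
  have hj : j < m := by rwa [length_cycWin hrk] at h1
  show x _ = x _
  congr 1
  apply Fin.ext
  show (t + j) % (r + k) = k + (t - k + j) % r
  rw [Nat.mod_eq_of_lt (by omega), Nat.mod_eq_of_lt (by omega)]
  omega

end Aux

section DegSeq

open Classical in
/-- The finite set of degree sequences of length `k`. -/
noncomputable def DS (k : ℕ) : Finset (List ℕ) :=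
  ((Finset.univ : Finset (Fin k → Fin (k + 1))).image
    fun g => List.ofFn fun i => ((g i : ℕ))).filter IsDegSeq

lemma mem_DS {k : ℕ} {d : List ℕ} : d ∈ DS k ↔ IsDegSeq d ∧ d.length = k := by
  classical
  constructor
  · intro hd
    rw [DS, Finset.mem_filter] at hd
    refine ⟨by convert hd.2, ?_⟩
    obtain ⟨g, _, rfl⟩ := Finset.mem_image.1 hd.1
    simp
  · rintro ⟨hd, rfl⟩
    rw [DS, Finset.mem_filter]
    refine ⟨Finset.mem_image.2 ⟨fun i => ⟨d[i.val], ?_⟩, Finset.mem_univ _, ?_⟩, by convert hd⟩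
    · have h1 : d[i.val] ≤ d.sum :=
        List.single_le_sum (fun x _ => Nat.zero_le x) _ (List.getElem_mem i.isLt)
      have h2 : d.sum = d.length - 1 := hd.2.2
      omega
    · exact List.ofFn_getElem (xs := d)

lemma sum_of_mem_DS {k : ℕ} {d : List ℕ} (hd : d ∈ DS k) : d.sum = k - 1 := by
  obtain ⟨h1, h2⟩ := mem_DS.1 hd
  rw [h1.2.2, h2]

lemma fk_supp {f : List ℕ → ℝ} (hf : IsToll f) (k : ℕ) (d : List ℕ)
    (hd : ¬(IsDegSeq d ∧ d.length = k)) : fk f k d = 0 := by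
  rw [fk]
  by_cases h1 : d.length = k
  · rw [if_pos h1]
    exact hf d fun h => hd ⟨h, h1⟩
  · rw [if_neg h1]

lemma fk_mul_supp {f : List ℕ → ℝ} (hf : IsToll f) (k : ℕ) (w : List ℕ → ℝ) (d : List ℕ)
    (hd : ¬(IsDegSeq d ∧ d.length = k)) : fk f k d * w d = 0 := by
  rw [fk_supp hf k d hd, zero_mul]

lemma supp_sum {k : ℕ} {w : List ℕ → ℝ}
    (hw : ∀ d, ¬(IsDegSeq d ∧ d.length = k) → w d = 0) (l : List ℕ) :
    w l = ∑ d ∈ DS k, if l = d then w d else 0 := by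
  classical
  rw [Finset.sum_ite_eq (DS k) l w]
  by_cases h : l ∈ DS k
  · rw [if_pos h]
  · rw [if_neg h, hw l fun hc => h (mem_DS.2 hc)]

/-- Two overlapping, non-nested windows cannot both be degree sequences. -/
lemma overlap_zero {u v : List ℕ} (hu : IsDegSeq u) {t : ℕ} (ht1 : 1 ≤ t)
    (ht2 : t < u.length) (hlen : u.length - t < v.length)
    (hpre : u.drop t <+: v) : ¬ IsDegSeq v := by
  intro hv
  have hdl : (u.drop t).length = u.length - t := List.length_drop
  have htake : u.drop t = v.take (u.drop t).length := List.prefix_iff_eq_take.1 hpre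
  have h1 : u.length - t ≤ (v.take (u.length - t)).sum := by
    have := hv.2.1 (u.length - t) (by omega) (by omega)
    exact this
  have h2 : v.take (u.length - t) = u.drop t := by rw [htake, hdl]
  rw [h2] at h1
  have h3 : t ≤ (u.take t).sum := hu.2.1 t ht1 ht2
  have h4 : (u.take t).sum + (u.drop t).sum = u.sum := List.sum_take_add_sum_drop u t
  have h5 : u.sum = u.length - 1 := hu.2.2
  omega

lemma fk_ne_zero {f : List ℕ → ℝ} (hf : IsToll f) {k : ℕ} {l : List ℕ}
    (h : fk f k l ≠ 0) : IsDegSeq l ∧ l.length = k := by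
  by_contra hc
  exact h (fk_supp hf k l hc)

/-- Pointwise vanishing for overlapping non-nested cyclic windows. -/
lemma bad_t_zero {f : List ℕ → ℝ} (hf : IsToll f) {n k m t : ℕ}
    (hm : 1 ≤ m) (hmk : m ≤ k) (hkn : k ≤ n)
    (ht : k - m + 1 ≤ t) (htn : t < n) (hbad : t < k ∨ n - m + 1 ≤ t)
    (x : Fin n → ℕ) :
    fk f k (cycWin x 0 k) * fk f m (cycWin x t m) = 0 := by
  have hn : 0 < n := by omega
  by_contra hc
  have h1 : fk f k (cycWin x 0 k) ≠ 0 := fun h => hc (by rw [h, zero_mul])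
  have h2 : fk f m (cycWin x t m) ≠ 0 := fun h => hc (by rw [h, mul_zero])
  have hu := fk_ne_zero hf h1
  have hv := fk_ne_zero hf h2
  have hul : (cycWin x 0 k).length = k := hu.2
  have hvl : (cycWin x t m).length = m := hv.2
  rcases lt_or_ge t k with hcase | hcase
  · -- window `t` starts inside the first window and exits to the right
    refine overlap_zero hu.1 (t := t) (by omega) (by omega) (by omega) ?_ hv.1
    · have : (cycWin x 0 k).drop t = (cycWin x t m).take (k - t) := by
        apply List.ext_getElem
        · simp only [List.length_drop, List.length_take, length_cycWin hn]; omega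
        intro j h1' h2'
        have hj : j < k - t := by
          simp only [List.length_drop, length_cycWin hn] at h1'; omega
        rw [List.getElem_take, List.getElem_drop, getElem_cycWin hn, getElem_cycWin hn]
        congr 1
        apply Fin.ext
        show (0 + (t + j)) % n = (t + j) % n
        rw [Nat.zero_add]
      rw [this]
      exact List.take_prefix _ _
  · -- window `t` wraps around and ends inside the first window
    have hwrap : n - m + 1 ≤ t := by rcases hbad with h | h <;> omega
    refine overlap_zero hv.1 (t := n - t) (by omega) (by omega) (by omega) ?_ hu.1
    · have : (cycWin x t m).drop (n - t) = (cycWin x 0 k).take (m - (n - t)) := by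
        apply List.ext_getElem
        · simp only [List.length_drop, List.length_take, length_cycWin hn]; omega
        intro j h1' h2'
        have hj : j < m - (n - t) := by
          simp only [List.length_drop, length_cycWin hn] at h1'; omega
        rw [List.getElem_take, List.getElem_drop, getElem_cycWin hn, getElem_cycWin hn]
        congr 1
        apply Fin.ext
        show (t + (n - t + j)) % n = (0 + j) % n
        have e1 : t + (n - t + j) = n + j := by omega
        rw [e1, Nat.zero_add, Nat.add_mod_left, Nat.mod_eq_of_lt (show j < n by omega)]
      rw [this]
      exact List.take_prefix _ _

/-- `addF (fk f m)` on a list of length `k` is the sum of `fk f m` over the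
length-`m` windows. -/
lemma addF_fk (f : List ℕ → ℝ) {m k : ℕ} (hm : 1 ≤ m) (hmk : m ≤ k)
    {d : List ℕ} (hd : d.length = k) :
    addF (fk f m) d = ∑ t ∈ Finset.range (k - m + 1), fk f m ((d.drop t).take m) := by
  rw [addF, hd]
  have hinner : ∀ i ∈ Finset.range k,
      (∑ j ∈ Finset.Icc 1 (k - i), fk f m ((d.drop i).take j))
        = fk f m ((d.drop i).take m) := by
    intro i hi
    rw [Finset.mem_range] at hi
    apply Finset.sum_eq_single m
    · intro j hj hjm
      rw [Finset.mem_Icc] at hj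
      have hlen : ((d.drop i).take j).length = j := by
        simp only [List.length_take, List.length_drop, hd]; omega
      rw [fk, if_neg (by rw [hlen]; exact hjm)]
    · intro hm'
      rw [Finset.mem_Icc] at hm'
      have hki : k - i < m := by omega
      have hlen : ((d.drop i).take m).length = k - i := by
        simp only [List.length_take, List.length_drop, hd]; omega
      rw [fk, if_neg (by rw [hlen]; omega)]
  rw [Finset.sum_congr rfl hinner]
  symm
  apply Finset.sum_subset
  · intro t htmem
    rw [Finset.mem_range] at *
    omega
  · intro t ht1 ht2
    rw [Finset.mem_range] at *
    have hlen : ((d.drop t).take m).length = k - t := by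
      simp only [List.length_take, List.length_drop, hd]; omega
    rw [fk, if_neg (by rw [hlen]; omega)]

end DegSeq

section Meas

variable (ν : Measure ℕ) [IsProbabilityMeasure ν]

instance piMeas_prob (n : ℕ) : IsProbabilityMeasure (piMeas ν n) := by
  unfold piMeas; infer_instance

lemma piCongrLeft_apply_const {M N : ℕ} (e : Fin M ≃ Fin N) (x : Fin M → ℕ) :
    (MeasurableEquiv.piCongrLeft (fun _ => ℕ) e) x = fun j => x (e.symm j) := by
  ext j
  simp [MeasurableEquiv.piCongrLeft, Equiv.piCongrLeft_apply_eq_cast]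

lemma piMeas_map {M N : ℕ} (e : Fin M ≃ Fin N) (A : Set (Fin N → ℕ)) :
    piMeas ν M {x | (fun j => x (e.symm j)) ∈ A} = piMeas ν N A := by
  have hmp : MeasurePreserving (⇑(MeasurableEquiv.piCongrLeft (fun _ : Fin N => ℕ) e))
      (piMeas ν M) (piMeas ν N) :=
    measurePreserving_piCongrLeft (fun _ : Fin N => ν) e
  have h := hmp.measure_preimage (measAll A).nullMeasurableSet
  rw [← h]
  congr 1
  ext x
  simp only [Set.mem_setOf_eq, Set.mem_preimage, piCongrLeft_apply_const]

lemma setIntegral_rot (n : ℕ) [NeZero n] (i : ℕ) (g : (Fin n → ℕ) → ℝ)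
    (A : Set (Fin n → ℕ))
    (hA : ∀ x : Fin n → ℕ, ((fun j => x (j + (i : Fin n))) ∈ A ↔ x ∈ A)) :
    ∫ x in A, g (fun j => x (j + (i : Fin n))) ∂(piMeas ν n)
      = ∫ x in A, g x ∂(piMeas ν n) := by
  set e : Fin n ≃ Fin n := (Equiv.addRight ((i : Fin n))).symm with he
  have hmp : MeasurePreserving (⇑(MeasurableEquiv.piCongrLeft (fun _ : Fin n => ℕ) e))
      (piMeas ν n) (piMeas ν n) :=
    measurePreserving_piCongrLeft (fun _ : Fin n => ν) e
  have happ : ∀ x : Fin n → ℕ,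
      (MeasurableEquiv.piCongrLeft (fun _ : Fin n => ℕ) e) x
        = fun j => x (j + (i : Fin n)) := by
    intro x
    rw [piCongrLeft_apply_const]
    rfl
  have hkey := hmp.setIntegral_preimage_emb
    (MeasurableEquiv.measurableEmbedding _) g A
  have hpre : (⇑(MeasurableEquiv.piCongrLeft (fun _ : Fin n => ℕ) e)) ⁻¹' A = A := by
    ext x
    rw [Set.mem_preimage, happ x]
    exact hA x
  rw [hpre] at hkey
  rw [← hkey]
  apply setIntegral_congr_fun (measAll A)
  intro x _
  exact congrArg g (happ x).symm

lemma sum_comp_addRight {n : ℕ} [NeZero n] (x : Fin n → ℕ) (c : Fin n) :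
    ∑ j, x (j + c) = ∑ j, x j :=
  Equiv.sum_comp (Equiv.addRight c) x

lemma peel_meas (n : ℕ) (a : ℕ) (Q : Set (Fin n → ℕ)) :
    piMeas ν (n + 1) {x | x 0 = a ∧ Fin.tail x ∈ Q} = ν {a} * piMeas ν n Q := by
  have hmp := measurePreserving_piFinSuccAbove (fun _ : Fin (n + 1) => ν) 0
  have hset : {x : Fin (n + 1) → ℕ | x 0 = a ∧ Fin.tail x ∈ Q}
      = (MeasurableEquiv.piFinSuccAbove (fun _ => ℕ) 0) ⁻¹' ({a} ×ˢ Q) := by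
    ext x
    simp only [Set.mem_setOf_eq, Set.mem_preimage, Set.mem_prod, Set.mem_singleton_iff,
      MeasurableEquiv.piFinSuccAbove, MeasurableEquiv.coe_mk, MeasurableEquiv.piFinSuccAbove_apply,
      Fin.insertNthEquiv, Equiv.coe_fn_symm_mk, Fin.removeNth_zero]
  rw [piMeas, hset, hmp.measure_preimage (Set.to_countable _).measurableSet.nullMeasurableSet,
    Measure.prod_prod]
  rfl

lemma cycWin_len_zero {n : ℕ} (x : Fin n → ℕ) (i : ℕ) : cycWin x i 0 = [] := by
  rw [cycWin]; split <;> simp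

lemma cycWin_zero_cons {N k : ℕ} (hk : k ≤ N) (x : Fin (N + 1) → ℕ) :
    cycWin x 0 (k + 1) = x 0 :: cycWin (Fin.tail x) 0 k := by
  rw [cycWin_eq_ofFn (Nat.succ_pos N), List.ofFn_succ]
  congr 1
  refine List.ext_getElem ?_ ?_
  · simp only [List.length_ofFn]
    rcases Nat.eq_zero_or_pos k with rfl | hkpos
    · rw [cycWin_len_zero]; rfl
    · rw [length_cycWin (show 0 < N by omega)]
  · intro j h1 h2
    have hj : j < k := by simpa using h1
    have hN : 0 < N := by omega
    rw [List.getElem_ofFn, getElem_cycWin hN]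
    simp only [Fin.tail]
    congr 1
    apply Fin.ext
    simp only [Fin.val_succ]
    show (0 + (j + 1)) % (N + 1) = (0 + j) % N + 1
    rw [Nat.zero_add, Nat.zero_add, Nat.mod_eq_of_lt (by omega), Nat.mod_eq_of_lt (by omega)]

end Meas

section Peel

variable (ν : Measure ℕ) [IsProbabilityMeasure ν]

lemma prefix_peel_core (d : List ℕ) : ∀ (r : ℕ) (Q : Set (Fin r → ℕ)),
    piMeas ν (r + d.length)
      {x | cycWin x 0 d.length = d ∧ (fun i : Fin r => x ⟨d.length + ↑i, by omega⟩) ∈ Q}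
      = (d.map fun a => ν {a}).prod * piMeas ν r Q := by
  induction d with
  | nil =>
    intro r Q
    simp only [List.length_nil, List.map_nil, List.prod_nil, one_mul]
    have hset : {x : Fin (r + 0) → ℕ |
        cycWin x 0 0 = [] ∧ (fun i : Fin r => x ⟨0 + ↑i, by omega⟩) ∈ Q} = Q := by
      ext x
      simp only [Set.mem_setOf_eq, cycWin_len_zero, true_and]
      have hfun : (fun i : Fin r => x ⟨0 + ↑i, by omega⟩) = x := by
        funext i
        exact congrArg x (Fin.ext (Nat.zero_add _))
      rw [hfun]
    rw [hset]
    rfl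
  | cons a d' ih =>
    intro r Q
    have hset : {x : Fin (r + (a :: d').length) → ℕ |
          cycWin x 0 (a :: d').length = a :: d'
            ∧ (fun i : Fin r => x ⟨(a :: d').length + ↑i, by omega⟩) ∈ Q}
        = {x : Fin ((r + d'.length) + 1) → ℕ | x 0 = a ∧ Fin.tail x ∈
            {y : Fin (r + d'.length) → ℕ | cycWin y 0 d'.length = d'
              ∧ (fun i : Fin r => y ⟨d'.length + ↑i, by omega⟩) ∈ Q}} := by
      ext x
      simp only [Set.mem_setOf_eq, List.length_cons]
      rw [cycWin_zero_cons (Nat.le_add_left _ _), List.cons_eq_cons]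
      have hfun : (fun i : Fin r => x ⟨d'.length + 1 + ↑i,
              by simp only [List.length_cons, Nat.add_eq]; omega⟩)
          = (fun i : Fin r => Fin.tail x ⟨d'.length + ↑i,
              by simp only [List.length_cons, Nat.add_eq]; omega⟩) := by
        funext i
        show x _ = x _
        exact congrArg x (Fin.ext (by simp [Fin.tail]; omega))
      rw [hfun]
      constructor
      · rintro ⟨⟨ha, hw⟩, hq⟩
        exact ⟨ha, hw, hq⟩
      · rintro ⟨ha, hw, hq⟩
        exact ⟨⟨ha, hw⟩, hq⟩
    rw [hset, List.map_cons, List.prod_cons, mul_assoc, ← ih r Q]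
    exact peel_meas ν (r + d'.length) a _

lemma window_sum_meas (d : List ℕ) (N r u s : ℕ) (hlen : 0 < d.length)
    (hN : N = r + d.length) (hu : u = d.sum + s) :
    piMeas ν N {x | cycWin x 0 d.length = d ∧ ∑ i, x i = u}
      = (d.map fun a => ν {a}).prod * piMeas ν r {y | ∑ i, y i = s} := by
  subst hN hu
  rw [← prefix_peel_core ν d r {y | ∑ i, y i = s}]
  congr 1
  ext x
  simp only [Set.mem_setOf_eq]
  constructor
  · rintro ⟨h1, h2⟩
    refine ⟨h1, ?_⟩
    have hs := sum_split_s16 hlen x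
    rw [h1] at hs
    have h3 := hs.symm.trans h2
    exact Nat.add_left_cancel h3
  · rintro ⟨h1, h2⟩
    refine ⟨h1, ?_⟩
    have hs := sum_split_s16 hlen x
    rw [h1] at hs
    rw [hs]
    exact congrArg (d.sum + ·) h2

lemma window_shift_meas (N p m' u : ℕ) (e : List ℕ) (hm : 0 < m') (hp : p + m' ≤ N) :
    piMeas ν N {y | cycWin y p m' = e ∧ ∑ i, y i = u}
      = piMeas ν N {y | cycWin y 0 m' = e ∧ ∑ i, y i = u} := by
  have : NeZero N := ⟨by omega⟩
  have h := piMeas_map ν ((Equiv.addRight ((p : Fin N))).symm)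
      {y : Fin N → ℕ | cycWin y 0 m' = e ∧ ∑ i, y i = u}
  rw [← h]
  congr 1
  ext x
  simp only [Set.mem_setOf_eq, Equiv.symm_symm, Equiv.coe_addRight]
  have h1 : cycWin (fun j => x (j + (p : Fin N))) 0 m' = cycWin x p m' :=
    (cycWin_add_comp x p 0 m').trans (by rw [Nat.add_zero])
  have h2 : ∑ j, x (j + (p : Fin N)) = ∑ j, x j := sum_comp_addRight x _
  rw [h1, h2]

lemma pair_meas (d e : List ℕ) (n k m t : ℕ)
    (hd : d.length = k) (he : e.length = m) (hds : d.sum = k - 1) (hes : e.sum = m - 1)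
    (hk1 : 1 ≤ k) (hm1 : 1 ≤ m) (hkt : k ≤ t) (htm : t + m ≤ n) :
    piMeas ν n {x | cycWin x 0 k = d ∧ (cycWin x t m = e ∧ ∑ i, x i = n - 1)}
      = (d.map fun a => ν {a}).prod *
        ((e.map fun a => ν {a}).prod
          * piMeas ν (n - k - m) {y | ∑ i, y i = n - k - m + 1}) := by
  subst hd he
  obtain ⟨r, rfl⟩ : ∃ r, n = r + d.length := ⟨n - d.length, by omega⟩
  have hmr : e.length ≤ r := by omega
  have hset1 : {x : Fin (r + d.length) → ℕ |
        cycWin x 0 d.length = d ∧ (cycWin x t e.length = e ∧ ∑ i, x i = r + d.length - 1)}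
      = {x | cycWin x 0 d.length = d ∧ (fun i : Fin r => x ⟨d.length + ↑i, by omega⟩) ∈
          {y : Fin r → ℕ | cycWin y (t - d.length) e.length = e ∧ ∑ i, y i = r}} := by
    ext x
    simp only [Set.mem_setOf_eq]
    have hwin : cycWin x t e.length
        = cycWin (fun i : Fin r => x ⟨d.length + ↑i, by omega⟩) (t - d.length) e.length :=
      cycWin_drop x hm1 hkt htm
    rw [hwin]
    have hs := sum_split_s16 (show 0 < d.length by omega) x
    constructor
    · rintro ⟨h1, h2, h3⟩
      refine ⟨h1, h2, ?_⟩
      rw [h1] at hs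
      have h4 : d.sum + (∑ i : Fin r, x ⟨d.length + ↑i, by omega⟩) = d.sum + r := by
        omega
      exact Nat.add_left_cancel h4
    · rintro ⟨h1, h2, h3⟩
      refine ⟨h1, h2, ?_⟩
      rw [h1] at hs
      omega
  rw [hset1, prefix_peel_core ν d r _]
  congr 1
  rw [window_shift_meas ν r (t - d.length) e.length r e hm1 (by omega)]
  have hws := window_sum_meas ν e r (r - e.length) r (r - e.length + 1) (by omega)
    (by omega) (by omega)
  rw [hws, show r + d.length - d.length - e.length = r - e.length by omega]

lemma piMeas_fin_zero_sum (s : ℕ) :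
    piMeas ν 0 {y : Fin 0 → ℕ | ∑ i, y i = s} = if s = 0 then 1 else 0 := by
  rcases Nat.eq_zero_or_pos s with rfl | hs
  · rw [if_pos rfl]
    have hst : {y : Fin 0 → ℕ | ∑ i, y i = 0} = Set.univ := by
      ext y; simp
    rw [hst]
    exact measure_univ
  · rw [if_neg (by omega)]
    have hst : {y : Fin 0 → ℕ | ∑ i, y i = s} = ∅ := by
      ext y; simp; omega
    rw [hst]
    exact measure_empty

end Peel

section Integr

variable (ν : Measure ℕ) [IsProbabilityMeasure ν]

lemma integrable_ite (n : ℕ) (p : (Fin n → ℕ) → Prop) [DecidablePred p] (c : ℝ) :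
    Integrable (fun x => if p x then c else 0) (piMeas ν n) := by
  have hfun : (fun x : Fin n → ℕ => if p x then c else 0)
      = Set.indicator {x | p x} (fun _ => c) := by
    funext x
    by_cases h : p x <;> simp [Set.indicator, h]
  rw [hfun]
  exact (integrable_const c).indicator (measAll _)

lemma setIntegral_ite (n : ℕ) (p : (Fin n → ℕ) → Prop) [DecidablePred p] (c : ℝ)
    (A : Set (Fin n → ℕ)) :
    ∫ x in A, (if p x then c else 0) ∂(piMeas ν n)
      = c * ((piMeas ν n) (A ∩ {x | p x})).toReal := by
  have hfun : (fun x : Fin n → ℕ => if p x then c else 0)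
      = Set.indicator {x | p x} (fun _ => c) := by
    funext x
    by_cases h : p x <;> simp [Set.indicator, h]
  rw [hfun, setIntegral_indicator (measAll _), setIntegral_const, smul_eq_mul, mul_comm]
  rfl

lemma window_fun_eq (n : ℕ) {k : ℕ} (w : List ℕ → ℝ)
    (hw : ∀ l, ¬(IsDegSeq l ∧ l.length = k) → w l = 0) (i : ℕ) :
    (fun x : Fin n → ℕ => w (cycWin x i k))
      = fun x => ∑ d ∈ DS k, if cycWin x i k = d then w d else 0 := by
  funext x
  exact supp_sum hw _

lemma integrable_window (n : ℕ) {k : ℕ} (w : List ℕ → ℝ)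
    (hw : ∀ l, ¬(IsDegSeq l ∧ l.length = k) → w l = 0) (i : ℕ) :
    Integrable (fun x : Fin n → ℕ => w (cycWin x i k)) (piMeas ν n) := by
  rw [window_fun_eq n w hw i]
  exact integrable_finset_sum _ fun d _ => integrable_ite ν n _ _

lemma setIntegral_window (n : ℕ) {k : ℕ} (w : List ℕ → ℝ)
    (hw : ∀ l, ¬(IsDegSeq l ∧ l.length = k) → w l = 0) (i : ℕ) (A : Set (Fin n → ℕ)) :
    ∫ x in A, w (cycWin x i k) ∂(piMeas ν n)
      = ∑ d ∈ DS k, w d * ((piMeas ν n) (A ∩ {x | cycWin x i k = d})).toReal := by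
  rw [window_fun_eq n w hw i,
    integral_finset_sum _ fun d _ => (integrable_ite ν n _ _).integrableOn]
  exact Finset.sum_congr rfl fun d _ => setIntegral_ite ν n _ _ A

lemma window2_fun_eq (n : ℕ) {k m : ℕ} (w1 w2 : List ℕ → ℝ)
    (hw1 : ∀ l, ¬(IsDegSeq l ∧ l.length = k) → w1 l = 0)
    (hw2 : ∀ l, ¬(IsDegSeq l ∧ l.length = m) → w2 l = 0) (i j : ℕ) :
    (fun x : Fin n → ℕ => w1 (cycWin x i k) * w2 (cycWin x j m))
      = fun x => ∑ d ∈ DS k, ∑ e ∈ DS m,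
          if cycWin x i k = d ∧ cycWin x j m = e then w1 d * w2 e else 0 := by
  funext x
  rw [supp_sum hw1, supp_sum hw2, Finset.sum_mul_sum]
  exact Finset.sum_congr rfl fun d _ => Finset.sum_congr rfl fun e _ =>
    ite_zero_mul_ite_zero _ _ _ _

lemma integrable_window2 (n : ℕ) {k m : ℕ} (w1 w2 : List ℕ → ℝ)
    (hw1 : ∀ l, ¬(IsDegSeq l ∧ l.length = k) → w1 l = 0)
    (hw2 : ∀ l, ¬(IsDegSeq l ∧ l.length = m) → w2 l = 0) (i j : ℕ) :
    Integrable (fun x : Fin n → ℕ => w1 (cycWin x i k) * w2 (cycWin x j m))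
      (piMeas ν n) := by
  rw [window2_fun_eq n w1 w2 hw1 hw2 i j]
  exact integrable_finset_sum _ fun d _ => integrable_finset_sum _ fun e _ =>
    integrable_ite ν n _ _

lemma setIntegral_window2 (n : ℕ) {k m : ℕ} (w1 w2 : List ℕ → ℝ)
    (hw1 : ∀ l, ¬(IsDegSeq l ∧ l.length = k) → w1 l = 0)
    (hw2 : ∀ l, ¬(IsDegSeq l ∧ l.length = m) → w2 l = 0) (i j : ℕ)
    (A : Set (Fin n → ℕ)) :
    ∫ x in A, w1 (cycWin x i k) * w2 (cycWin x j m) ∂(piMeas ν n)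
      = ∑ d ∈ DS k, ∑ e ∈ DS m, w1 d * w2 e *
          ((piMeas ν n) (A ∩ {x | cycWin x i k = d ∧ cycWin x j m = e})).toReal := by
  rw [window2_fun_eq n w1 w2 hw1 hw2 i j,
    integral_finset_sum _ fun d _ =>
      (integrable_finset_sum _ fun e _ => integrable_ite ν n _ _).integrableOn]
  refine Finset.sum_congr rfl fun d _ => ?_
  rw [integral_finset_sum _ fun e _ => (integrable_ite ν n _ _).integrableOn]
  exact Finset.sum_congr rfl fun e _ => setIntegral_ite ν n _ _ A

lemma EE_eq (k : ℕ) (hk : 0 < k) (w : List ℕ → ℝ)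
    (hw : ∀ l, ¬(IsDegSeq l ∧ l.length = k) → w l = 0) :
    EE ν k w = ∑ d ∈ DS k, w d * ((d.map fun a => ν {a}).prod).toReal := by
  rw [EE, ← setIntegral_univ]
  have hofn : (fun x : Fin k → ℕ => w (List.ofFn x)) = fun x => w (cycWin x 0 k) := by
    funext x
    congr 1
    rw [cycWin_eq_ofFn hk]
    congr 1
    funext j
    exact congrArg x (Fin.ext (by simp [Nat.mod_eq_of_lt j.isLt]))
  rw [hofn, setIntegral_window ν k w hw 0 Set.univ]
  refine Finset.sum_congr rfl fun d hd => ?_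
  have hlen : d.length = k := (mem_DS.1 hd).2
  congr 1
  rw [Set.univ_inter]
  have hset : {x : Fin k → ℕ | cycWin x 0 k = d}
      = {x | cycWin x 0 d.length = d ∧ ∑ i, x i = d.sum} := by
    ext x
    simp only [Set.mem_setOf_eq, hlen]
    constructor
    · intro h
      exact ⟨h, by rw [← h, sum_cycWin_full hk]⟩
    · intro h
      exact h.1
  rw [hset, window_sum_meas ν d k 0 d.sum 0 (by omega) (by omega) (by omega),
    piMeas_fin_zero_sum, if_pos rfl, mul_one]

end Integr

section Master

variable (ν : Measure ℕ) [IsProbabilityMeasure ν]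

lemma sum_shift {M : Type*} [AddCommMonoid M] (n : ℕ) [NeZero n] (i : ℕ) (g : ℕ → M) :
    ∑ j ∈ Finset.range n, g j = ∑ t ∈ Finset.range n, g ((i + t) % n) := by
  rw [← Fin.sum_univ_eq_sum_range g n,
    ← Fin.sum_univ_eq_sum_range (fun t => g ((i + t) % n)) n,
    ← Equiv.sum_comp (Equiv.addLeft ((i : Fin n))) (fun s : Fin n => g s.val)]
  apply Finset.sum_congr rfl
  intro t _
  congr 1
  show ((i : Fin n) + t).val = (i + t.val) % n
  rw [Fin.add_def, Fin.val_natCast]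
  exact Nat.mod_add_mod i n t.val

lemma window_sum_DS (n k : ℕ) (hk : 1 ≤ k) (hkn : k ≤ n) (w : List ℕ → ℝ)
    (hw : ∀ l, ¬(IsDegSeq l ∧ l.length = k) → w l = 0) :
    ∫ x in {x : Fin n → ℕ | ∑ i, x i = n - 1}, w (cycWin x 0 k) ∂(piMeas ν n)
      = EE ν k w * probS ν (n - k) (n - k) := by
  have hn : 0 < n := by omega
  rw [setIntegral_window ν n w hw 0 _, EE_eq ν k hk w hw, Finset.sum_mul]
  refine Finset.sum_congr rfl fun d hd => ?_
  have hlen : d.length = k := (mem_DS.1 hd).2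
  have hsum : d.sum = k - 1 := sum_of_mem_DS hd
  have hset : {x : Fin n → ℕ | ∑ i, x i = n - 1} ∩ {x | cycWin x 0 k = d}
      = {x | cycWin x 0 d.length = d ∧ ∑ i, x i = n - 1} := by
    rw [hlen]
    ext x
    simp only [Set.mem_inter_iff, Set.mem_setOf_eq]
    tauto
  rw [hset, window_sum_meas ν d n (n - k) (n - 1) (n - k) (by omega) (by omega) (by omega),
    ENNReal.toReal_mul, mul_assoc]
  rfl

lemma first_moment (f : List ℕ → ℝ) (hf : IsToll f) (n k : ℕ) (hk : 1 ≤ k) (hkn : k ≤ n) :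
    ∫ x in {x : Fin n → ℕ | ∑ i, x i = n - 1}, cycFk f k n x ∂(piMeas ν n)
      = n * (EE ν k (fk f k) * probS ν (n - k) (n - k)) := by
  have hn : 0 < n := by omega
  haveI : NeZero n := ⟨by omega⟩
  set S := {x : Fin n → ℕ | ∑ i, x i = n - 1} with hSdef
  have hS : ∀ (i : ℕ) (x : Fin n → ℕ), ((fun j => x (j + (i : Fin n))) ∈ S ↔ x ∈ S) := by
    intro i x
    simp only [hSdef, Set.mem_setOf_eq]
    rw [sum_comp_addRight x (i : Fin n)]
  simp only [cycFk]
  rw [integral_finset_sum _ fun i _ =>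
    (integrable_window ν n _ (fk_supp hf k) i).integrableOn]
  have hterm : ∀ i ∈ Finset.range n,
      (∫ x in S, fk f k (cycWin x i k) ∂(piMeas ν n))
        = EE ν k (fk f k) * probS ν (n - k) (n - k) := by
    intro i _
    have hrot := setIntegral_rot ν n i (fun y => fk f k (cycWin y 0 k)) S (hS i)
    calc ∫ x in S, fk f k (cycWin x i k) ∂(piMeas ν n)
        = ∫ x in S, fk f k (cycWin x 0 k) ∂(piMeas ν n) := by
          refine Eq.trans ?_ hrot
          apply setIntegral_congr_fun (measAll _)
          intro x _
          exact (congrArg (fk f k)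
            ((cycWin_add_comp x i 0 k).trans (by rw [Nat.add_zero]))).symm
      _ = EE ν k (fk f k) * probS ν (n - k) (n - k) :=
          window_sum_DS ν n k hk hkn _ (fk_supp hf k)
  rw [Finset.sum_congr rfl hterm, Finset.sum_const, Finset.card_range, nsmul_eq_mul]

lemma master_prod (f : List ℕ → ℝ) (hf : IsToll f) (n k m : ℕ)
    (hm : 1 ≤ m) (hmk : m ≤ k) (hkn : k ≤ n) :
    ∫ x in {x : Fin n → ℕ | ∑ i, x i = n - 1},
        cycFk f k n x * cycFk f m n x ∂(piMeas ν n)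
      = n * (EE ν k (fun d => fk f k d * addF (fk f m) d) * probS ν (n - k) (n - k))
        + n * (((Finset.Icc k (n - m)).card : ℝ) *
            (EE ν k (fk f k) * EE ν m (fk f m) * probS ν (n - k - m) (n - k - m + 1))) := by
  have hn : 0 < n := by omega
  haveI : NeZero n := ⟨by omega⟩
  set S := {x : Fin n → ℕ | ∑ i, x i = n - 1} with hSdef
  have hS : ∀ (i : ℕ) (x : Fin n → ℕ), ((fun j => x (j + (i : Fin n))) ∈ S ↔ x ∈ S) := by
    intro i x
    simp only [hSdef, Set.mem_setOf_eq]
    rw [sum_comp_addRight x (i : Fin n)]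
  set T : ℕ → ℝ := fun t =>
    ∫ x in S, fk f k (cycWin x 0 k) * fk f m (cycWin x t m) ∂(piMeas ν n) with hTdef
  have hexp : (fun x : Fin n → ℕ => cycFk f k n x * cycFk f m n x)
      = fun x => ∑ i ∈ Finset.range n, ∑ j ∈ Finset.range n,
          fk f k (cycWin x i k) * fk f m (cycWin x j m) := by
    funext x
    rw [cycFk, cycFk, Finset.sum_mul_sum]
  rw [hexp, integral_finset_sum _ fun i _ => (integrable_finset_sum _ fun j _ =>
      integrable_window2 ν n (fk f k) (fk f m) (fk_supp hf k) (fk_supp hf m) i j).integrableOn]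
  -- each `i`-term equals `∑ t ∈ range n, T t`
  have hrotc : ∀ i t : ℕ,
      (∫ x in S, fk f k (cycWin x i k) * fk f m (cycWin x (i + t) m) ∂(piMeas ν n))
        = T t := by
    intro i t
    have hrot := setIntegral_rot ν n i
      (fun y => fk f k (cycWin y 0 k) * fk f m (cycWin y t m)) S (hS i)
    refine Eq.trans ?_ hrot
    apply setIntegral_congr_fun (measAll _)
    intro x _
    have e1 : cycWin x i k = cycWin (fun j => x (j + (i : Fin n))) 0 k :=
      ((cycWin_add_comp x i 0 k).trans (by rw [Nat.add_zero])).symm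
    have e2 : cycWin x (i + t) m = cycWin (fun j => x (j + (i : Fin n))) t m :=
      (cycWin_add_comp x i t m).symm
    simp only [e1, e2]
  have hiterm : ∀ i ∈ Finset.range n,
      (∫ x in S, ∑ j ∈ Finset.range n,
          fk f k (cycWin x i k) * fk f m (cycWin x j m) ∂(piMeas ν n))
        = ∑ t ∈ Finset.range n, T t := by
    intro i _
    rw [integral_finset_sum _ fun j _ =>
      (integrable_window2 ν n (fk f k) (fk f m) (fk_supp hf k) (fk_supp hf m) i j).integrableOn]
    rw [sum_shift n i
      (fun j => ∫ x in S, fk f k (cycWin x i k) * fk f m (cycWin x j m) ∂(piMeas ν n))]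
    refine Finset.sum_congr rfl fun t _ => ?_
    have hmod : ∀ x : Fin n → ℕ, cycWin x ((i + t) % n) m = cycWin x (i + t) m :=
      fun x => cycWin_mod hn x (i + t) m
    calc (∫ x in S, fk f k (cycWin x i k) * fk f m (cycWin x ((i + t) % n) m) ∂(piMeas ν n))
        = ∫ x in S, fk f k (cycWin x i k) * fk f m (cycWin x (i + t) m) ∂(piMeas ν n) := by
          apply setIntegral_congr_fun (measAll _)
          intro x _
          simp only [hmod]
      _ = T t := hrotc i t
  rw [Finset.sum_congr rfl hiterm, Finset.sum_const, Finset.card_range, nsmul_eq_mul]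
  -- split the `t`-sum
  have hsub : Finset.range (k - m + 1) ∪ Finset.Icc k (n - m) ⊆ Finset.range n := by
    intro t ht
    rcases Finset.mem_union.1 ht with h | h
    · rw [Finset.mem_range] at *; omega
    · rw [Finset.mem_Icc] at h; rw [Finset.mem_range]; omega
  have hdisj : Disjoint (Finset.range (k - m + 1)) (Finset.Icc k (n - m)) := by
    rw [Finset.disjoint_left]
    intro t ht1 ht2
    rw [Finset.mem_range] at ht1
    rw [Finset.mem_Icc] at ht2
    omega
  have hvanish : ∀ t ∈ Finset.range n,
      t ∉ Finset.range (k - m + 1) ∪ Finset.Icc k (n - m) → T t = 0 := by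
    intro t htn htno
    rw [Finset.mem_range] at htn
    rw [Finset.mem_union, Finset.mem_range, Finset.mem_Icc] at htno
    push_neg at htno
    have ht1 : k - m + 1 ≤ t := by omega
    have hbad : t < k ∨ n - m + 1 ≤ t := by omega
    have hzero : (fun x : Fin n → ℕ =>
        fk f k (cycWin x 0 k) * fk f m (cycWin x t m)) = fun _ => 0 := by
      funext x
      exact bad_t_zero hf hm hmk hkn ht1 htn hbad x
    show (∫ x in S, fk f k (cycWin x 0 k) * fk f m (cycWin x t m) ∂(piMeas ν n)) = 0
    rw [hzero, integral_zero]
  have hTsplit : ∑ t ∈ Finset.range n, T t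
      = (∑ t ∈ Finset.range (k - m + 1), T t) + ∑ t ∈ Finset.Icc k (n - m), T t := by
    rw [← Finset.sum_union hdisj]
    exact (Finset.sum_subset hsub hvanish).symm
  -- nested block
  have hblock1 : ∑ t ∈ Finset.range (k - m + 1), T t
      = EE ν k (fun d => fk f k d * addF (fk f m) d) * probS ν (n - k) (n - k) := by
    have hswap : ∑ t ∈ Finset.range (k - m + 1), T t
        = ∫ x in S, ∑ t ∈ Finset.range (k - m + 1),
            fk f k (cycWin x 0 k) * fk f m (cycWin x t m) ∂(piMeas ν n) := by
      rw [integral_finset_sum _ fun t _ => (integrable_window2 ν n (fk f k) (fk f m)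
        (fk_supp hf k) (fk_supp hf m) 0 t).integrableOn]
    rw [hswap]
    have hpt : ∀ x : Fin n → ℕ, (∑ t ∈ Finset.range (k - m + 1),
        fk f k (cycWin x 0 k) * fk f m (cycWin x t m))
        = fk f k (cycWin x 0 k) * addF (fk f m) (cycWin x 0 k) := by
      intro x
      rw [← Finset.mul_sum]
      congr 1
      rw [addF_fk f hm hmk (length_cycWin hn x 0 k)]
      refine Finset.sum_congr rfl fun t ht => ?_
      rw [Finset.mem_range] at ht
      rw [cycWin_drop_take hn x 0 t k m (by omega) hkn, Nat.zero_add]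
    calc ∫ x in S, ∑ t ∈ Finset.range (k - m + 1),
            fk f k (cycWin x 0 k) * fk f m (cycWin x t m) ∂(piMeas ν n)
        = ∫ x in S, (fun d => fk f k d * addF (fk f m) d) (cycWin x 0 k) ∂(piMeas ν n) := by
          apply setIntegral_congr_fun (measAll _)
          intro x _
          exact hpt x
      _ = _ := window_sum_DS ν n k (by omega) hkn _
            (fun l hl => fk_mul_supp hf k _ l hl)
  -- disjoint block
  have hblock2 : ∀ t ∈ Finset.Icc k (n - m), T t
      = EE ν k (fk f k) * EE ν m (fk f m) * probS ν (n - k - m) (n - k - m + 1) := by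
    intro t ht
    rw [Finset.mem_Icc] at ht
    have htm : t + m ≤ n := by omega
    show (∫ x in S, fk f k (cycWin x 0 k) * fk f m (cycWin x t m) ∂(piMeas ν n)) = _
    rw [setIntegral_window2 ν n (fk f k) (fk f m) (fk_supp hf k) (fk_supp hf m) 0 t S]
    have hterm : ∀ d ∈ DS k, ∀ e ∈ DS m,
        fk f k d * fk f m e *
            ((piMeas ν n) (S ∩ {x | cycWin x 0 k = d ∧ cycWin x t m = e})).toReal
          = (fk f k d * ((d.map fun a => ν {a}).prod).toReal)
            * ((fk f m e * ((e.map fun a => ν {a}).prod).toReal)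
              * probS ν (n - k - m) (n - k - m + 1)) := by
      intro d hd e he
      have hset : S ∩ {x | cycWin x 0 k = d ∧ cycWin x t m = e}
          = {x | cycWin x 0 k = d ∧ (cycWin x t m = e ∧ ∑ i, x i = n - 1)} := by
        ext x
        simp only [hSdef, Set.mem_inter_iff, Set.mem_setOf_eq]
        tauto
      rw [hset, pair_meas ν d e n k m t (mem_DS.1 hd).2 (mem_DS.1 he).2
        (sum_of_mem_DS hd) (sum_of_mem_DS he) (by omega) hm ht.1 htm,
        ENNReal.toReal_mul, ENNReal.toReal_mul]
      show _ = _
      rw [probS]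
      ring
    rw [Finset.sum_congr rfl fun d hd => Finset.sum_congr rfl fun e he => hterm d hd e he,
      ← Finset.sum_mul_sum (DS k) (DS m)
        (fun d => fk f k d * ((d.map fun a => ν {a}).prod).toReal)
        (fun e => fk f m e * ((e.map fun a => ν {a}).prod).toReal
          * probS ν (n - k - m) (n - k - m + 1)),
      ← Finset.sum_mul,
      ← EE_eq ν k (show 0 < k by omega) (fk f k) (fk_supp hf k),
      ← EE_eq ν m (show 0 < m by omega) (fk f m) (fk_supp hf m)]
    ring
  rw [hTsplit, hblock1, Finset.sum_congr rfl hblock2, Finset.sum_const, nsmul_eq_mul]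
  ring

end Master

/-- **Lemma 6.1.** Exact covariance formula for `Cov(F_k(𝒯_n), F_m(𝒯_n))`,
with `r_j = P(S_{n-j} = n-j)/P(S_n = n-1)`, `q = P(S_{n-k-m} = n-k-m+1)/P(S_n = n-1)`,
`a_k = E[f_k(ξ_1,…,ξ_k)]`, `a_m = E[f_m(ξ_1,…,ξ_m)]` and
`b = E[f_k(ξ_1,…,ξ_k) F_m(ξ_1,…,ξ_k)]`. -/
theorem cov_Fk_Fm
    (ν : Measure ℕ) [IsProbabilityMeasure ν]
    (hp0 : 0 < ν {0})
    (hmom1 : Integrable (fun x : ℕ => (x : ℝ)) ν)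
    (hmean : ∫ x : ℕ, (x : ℝ) ∂ν = 1)
    (hmom2 : Integrable (fun x : ℕ => ((x : ℝ)) ^ 2) ν)
    (σ2 : ℝ) (hσ2 : σ2 = ∫ x : ℕ, ((x : ℝ) - 1) ^ 2 ∂ν) (hσ2pos : 0 < σ2)
    (f : List ℕ → ℝ) (hf : IsToll f)
    (n k m : ℕ) (hadm : Admissible ν n) (hm : 1 ≤ m) (hmk : m ≤ k) :
    (k + m - 1 ≤ n →
      covTn ν n (cycFk f k n) (cycFk f m n)
        = n * (probS ν (n - k) (n - k) / probS ν n (n - 1))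
            * EE ν k (fun d => fk f k d * addF (fk f m) d)
          - n * ((k : ℝ) + (m : ℝ) - 1)
            * (probS ν (n - k) (n - k) / probS ν n (n - 1))
            * (probS ν (n - m) (n - m) / probS ν n (n - 1))
            * EE ν k (fk f k) * EE ν m (fk f m)
          + n * ((n : ℝ) - (k : ℝ) - (m : ℝ) + 1)
            * EE ν k (fk f k) * EE ν m (fk f m)
            * (probS ν (n - k - m) (n - k - m + 1) / probS ν n (n - 1)
              - (probS ν (n - k) (n - k) / probS ν n (n - 1))
                * (probS ν (n - m) (n - m) / probS ν n (n - 1)))) ∧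
    (k ≤ n → n ≤ k + m →
      covTn ν n (cycFk f k n) (cycFk f m n)
        = n * (probS ν (n - k) (n - k) / probS ν n (n - 1))
            * EE ν k (fun d => fk f k d * addF (fk f m) d)
          - (n : ℝ) ^ 2
            * (probS ν (n - k) (n - k) / probS ν n (n - 1))
            * (probS ν (n - m) (n - m) / probS ν n (n - 1))
            * EE ν k (fk f k) * EE ν m (fk f m)) := by
  obtain ⟨hn1, hP⟩ := hadm
  have hPne : probS ν n (n - 1) ≠ 0 := ne_of_gt hP
  have hk1 : 1 ≤ k := le_trans hm hmk
  constructor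
  · intro hkm
    have hkn : k ≤ n := by omega
    have hmn : m ≤ n := by omega
    rw [covTn, condE, condE, condE,
      master_prod ν f hf n k m hm hmk hkn,
      first_moment ν f hf n k hk1 hkn,
      first_moment ν f hf n m hm hmn]
    have hCnat : (n - m + 1 - k) + k + m = n + 1 := by omega
    have hC : (((Finset.Icc k (n - m)).card : ℝ)) = (n : ℝ) - k - m + 1 := by
      rw [Nat.card_Icc]
      have h2 : ((n - m + 1 - k : ℕ) : ℝ) + k + m = (n : ℝ) + 1 := by
        exact_mod_cast congrArg (Nat.cast : ℕ → ℝ) hCnat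
      linarith
    rw [hC]
    field_simp
    ring
  · intro hkn hnkm
    have hmn : m ≤ n := by omega
    rw [covTn, condE, condE, condE,
      master_prod ν f hf n k m hm hmk hkn,
      first_moment ν f hf n k hk1 hkn,
      first_moment ν f hf n m hm hmn]
    have hQ : probS ν (n - k - m) (n - k - m + 1) = 0 := by
      rw [show n - k - m = 0 by omega]
      show ((piMeas ν 0) {x | ∑ i, x i = 0 + 1}).toReal = 0
      rw [piMeas_fin_zero_sum]
      norm_num
    rw [hQ]
    field_simp
    ring


end CGW
end
end
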